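/- Fix n > 0 and τ ∈ ℝ, and let T(τ) be the rotation matrix with rows (cos τ, sin τ, 0), (−sin τ, cos τ, 0), (0,0,1). Define g_τ(α, β, M) = (α̃, β̃, M̃) where α̃ = (cos τ · α + sin τ · β) T(−τ), β̃ = (−sin τ · α + cos τ · β) T(−τ), M̃ = M T(−τ) (row vectors multiplied on the right). Then: (i) if t ↦ (M(t), α(t), β(t)) solves dM/dt = M×ω + e₁×α + e₂×β, dα/dt = α×ω, dβ/dt = β×ω with ω = M I⁻¹, I = diag(n,n,1), then t ↦ g_τ(α(t), β(t), M(t)) solves the same system; (ii) g_τ preserves the function H = (1/2)(n(ω₁² + ω₂²) + ω₃²) − α₁ − β₂; (iii) if |α| = |β| and α·β = 0, then |α̃| = |β̃| and α̃·β̃ = 0. -/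

import Mathlib

open Matrix Real

lemma myHasDerivAt_vecMul {f : ℝ → Fin 3 → ℝ} {f' : Fin 3 → ℝ}
    (A : Matrix (Fin 3) (Fin 3) ℝ) {t : ℝ}
    (hf : HasDerivAt f f' t) : HasDerivAt (fun s => f s ᵥ* A) (f' ᵥ* A) t := by
  rw [hasDerivAt_pi] at hf ⊢
  intro i
  simp only [Matrix.vecMul, dotProduct]
  exact HasDerivAt.fun_sum fun j _ => (hf j).mul_const (A j i)

lemma myCrossSmulAdd (c s : ℝ) (a b v : Fin 3 → ℝ) :
    (c • a + s • b) ⨯₃ v = c • (a ⨯₃ v) + s • (b ⨯₃ v) := by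
  funext i; fin_cases i <;> simp [cross_apply]

/-- The one-parameter action
`g_τ(α, β, M) = ((cos τ · α + sin τ · β) T(−τ), (−sin τ · α + cos τ · β) T(−τ), M T(−τ))`
(i) maps solutions of the equations of motion to solutions,
(ii) preserves the Hamiltonian `H`, and
(iii) preserves the conditions `|α| = |β|`, `α·β = 0`. -/
theorem circle_action_is_symmetry
    (n τ : ℝ) (hn : 0 < n)
    (T : ℝ → Matrix (Fin 3) (Fin 3) ℝ)
    (hT : ∀ s, T s = !![cos s, sin s, 0; -sin s, cos s, 0; 0, 0, 1])
    (g : (Fin 3 → ℝ) × (Fin 3 → ℝ) × (Fin 3 → ℝ) →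
         (Fin 3 → ℝ) × (Fin 3 → ℝ) × (Fin 3 → ℝ))
    (hg : ∀ α β M : Fin 3 → ℝ,
      g (α, β, M) = ((cos τ • α + sin τ • β) ᵥ* T (-τ),
                     ((-sin τ) • α + cos τ • β) ᵥ* T (-τ),
                     M ᵥ* T (-τ)))
    (H : (Fin 3 → ℝ) × (Fin 3 → ℝ) × (Fin 3 → ℝ) → ℝ)
    (hH : ∀ α β M : Fin 3 → ℝ,
      H (α, β, M) =
        (1 / 2) * (n * ((M ᵥ* (Matrix.diagonal ![n, n, 1])⁻¹) 0 ^ 2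
                      + (M ᵥ* (Matrix.diagonal ![n, n, 1])⁻¹) 1 ^ 2)
                  + (M ᵥ* (Matrix.diagonal ![n, n, 1])⁻¹) 2 ^ 2)
        - α 0 - β 1) :
    -- (i) `g_τ` maps solutions to solutions
    (∀ M α β ω : ℝ → Fin 3 → ℝ,
      (∀ t, ω t = M t ᵥ* (Matrix.diagonal ![n, n, 1])⁻¹) →
      (∀ t, HasDerivAt M
        (M t ⨯₃ ω t + (![1, 0, 0] : Fin 3 → ℝ) ⨯₃ α t
          + (![0, 1, 0] : Fin 3 → ℝ) ⨯₃ β t) t) →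
      (∀ t, HasDerivAt α (α t ⨯₃ ω t) t) →
      (∀ t, HasDerivAt β (β t ⨯₃ ω t) t) →
      ∀ Mg αg βg ωg : ℝ → Fin 3 → ℝ,
        (∀ t, αg t = (g (α t, β t, M t)).1) →
        (∀ t, βg t = (g (α t, β t, M t)).2.1) →
        (∀ t, Mg t = (g (α t, β t, M t)).2.2) →
        (∀ t, ωg t = Mg t ᵥ* (Matrix.diagonal ![n, n, 1])⁻¹) →
        ∀ t, HasDerivAt Mg
            (Mg t ⨯₃ ωg t + (![1, 0, 0] : Fin 3 → ℝ) ⨯₃ αg t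
              + (![0, 1, 0] : Fin 3 → ℝ) ⨯₃ βg t) t
          ∧ HasDerivAt αg (αg t ⨯₃ ωg t) t
          ∧ HasDerivAt βg (βg t ⨯₃ ωg t) t)
    ∧
    -- (ii) `g_τ` preserves the Hamiltonian
    (∀ α β M : Fin 3 → ℝ, H (g (α, β, M)) = H (α, β, M))
    ∧
    -- (iii) `g_τ` preserves the conditions `|α| = |β|`, `α·β = 0`
    (∀ α β M : Fin 3 → ℝ, α ⬝ᵥ α = β ⬝ᵥ β → α ⬝ᵥ β = 0 →
      (g (α, β, M)).1 ⬝ᵥ (g (α, β, M)).1 = (g (α, β, M)).2.1 ⬝ᵥ (g (α, β, M)).2.1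
      ∧ (g (α, β, M)).1 ⬝ᵥ (g (α, β, M)).2.1 = 0) := by
  set c := cos τ with hc
  set s := sin τ with hs
  have h : s ^ 2 + c ^ 2 = 1 := sin_sq_add_cos_sq τ
  -- explicit action of T(-τ) on row vectors
  have hrot : ∀ v : Fin 3 → ℝ,
      v ᵥ* T (-τ) = ![v 0 * c + v 1 * s, -(v 0 * s) + v 1 * c, v 2] := by
    intro v
    rw [hT]
    funext i; fin_cases i <;>
      simp [Matrix.vecMul, dotProduct, Fin.sum_univ_three, cos_neg, sin_neg, hc, hs]
  -- inverse of the inertia tensor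
  have hinv : (Matrix.diagonal ![n, n, 1] : Matrix (Fin 3) (Fin 3) ℝ)⁻¹ =
      Matrix.diagonal ![n⁻¹, n⁻¹, 1] := by
    apply Matrix.inv_eq_right_inv
    rw [Matrix.diagonal_mul_diagonal]
    convert Matrix.diagonal_one using 2
    funext i; fin_cases i <;> simp [hn.ne']
  have hdiag : ∀ v : Fin 3 → ℝ,
      v ᵥ* (Matrix.diagonal ![n, n, 1] : Matrix (Fin 3) (Fin 3) ℝ)⁻¹ =
        ![v 0 * n⁻¹, v 1 * n⁻¹, v 2] := by
    intro v
    rw [hinv]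
    funext i; fin_cases i <;> simp [Matrix.vecMul_diagonal]
  -- rotation commutes with cross product
  have hcross : ∀ a b : Fin 3 → ℝ,
      (a ᵥ* T (-τ)) ⨯₃ (b ᵥ* T (-τ)) = (a ⨯₃ b) ᵥ* T (-τ) := by
    intro a b
    rw [hrot, hrot, hrot]
    funext i; fin_cases i
    · simp [cross_apply]; ring
    · simp [cross_apply]; ring
    · simp [cross_apply]; linear_combination (a 0 * b 1 - a 1 * b 0) * h
  -- rotation commutes with the (inverse) inertia tensor
  have hcomm : ∀ v : Fin 3 → ℝ,
      (v ᵥ* T (-τ)) ᵥ* (Matrix.diagonal ![n, n, 1] : Matrix (Fin 3) (Fin 3) ℝ)⁻¹ =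
      (v ᵥ* (Matrix.diagonal ![n, n, 1] : Matrix (Fin 3) (Fin 3) ℝ)⁻¹) ᵥ* T (-τ) := by
    intro v
    rw [hrot, hdiag, hdiag, hrot]
    funext i; fin_cases i <;> simp <;> ring
  -- rotation preserves the dot product
  have hdot : ∀ u v : Fin 3 → ℝ, (u ᵥ* T (-τ)) ⬝ᵥ (v ᵥ* T (-τ)) = u ⬝ᵥ v := by
    intro u v
    rw [hrot, hrot]
    simp only [dotProduct, Fin.sum_univ_three, Matrix.cons_val_zero, Matrix.cons_val_one,
      Matrix.head_cons, Matrix.cons_val_two, Matrix.tail_cons]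
    linear_combination (u 0 * v 0 + u 1 * v 1) * h
  refine ⟨?_, ?_, ?_⟩
  · -- (i)
    intro M α β ω hω hM hα hβ Mg αg βg ωg hαg hβg hMg hωg t
    have hαg' : αg = fun u => (c • α u + s • β u) ᵥ* T (-τ) := by
      funext u; rw [hαg, hg]
    have hβg' : βg = fun u => ((-s) • α u + c • β u) ᵥ* T (-τ) := by
      funext u; rw [hβg, hg]
    have hMg' : Mg = fun u => M u ᵥ* T (-τ) := by
      funext u; rw [hMg, hg]
    have hωg' : ∀ u, ωg u = ω u ᵥ* T (-τ) := by
      intro u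
      rw [hωg, hMg, hg]
      simp only
      rw [hcomm, ← hω]
    refine ⟨?_, ?_, ?_⟩
    · -- equation for Mg
      have key : Mg t ⨯₃ ωg t + (![1, 0, 0] : Fin 3 → ℝ) ⨯₃ αg t
          + (![0, 1, 0] : Fin 3 → ℝ) ⨯₃ βg t
          = (M t ⨯₃ ω t + (![1, 0, 0] : Fin 3 → ℝ) ⨯₃ α t
              + (![0, 1, 0] : Fin 3 → ℝ) ⨯₃ β t) ᵥ* T (-τ) := by
        simp only [hMg', hαg', hβg', hωg' t, hcross]
        simp only [hrot]
        funext i; fin_cases i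
        · simp [cross_apply]; ring
        · simp [cross_apply]; ring
        · simp [cross_apply]
          linear_combination (α t 1 - β t 0) * h
      rw [key, hMg']
      exact myHasDerivAt_vecMul _ (hM t)
    · -- equation for αg
      have key : αg t ⨯₃ ωg t = (c • (α t ⨯₃ ω t) + s • (β t ⨯₃ ω t)) ᵥ* T (-τ) := by
        simp only [hαg', hωg' t, hcross, myCrossSmulAdd]
      rw [key, hαg']
      exact myHasDerivAt_vecMul _ (((hα t).const_smul c).add ((hβ t).const_smul s))
    · -- equation for βg
      have key : βg t ⨯₃ ωg t = ((-s) • (α t ⨯₃ ω t) + c • (β t ⨯₃ ω t)) ᵥ* T (-τ) := by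
        simp only [hβg', hωg' t, hcross, myCrossSmulAdd]
      rw [key, hβg']
      exact myHasDerivAt_vecMul _ (((hα t).const_smul (-s)).add ((hβ t).const_smul c))
  · -- (ii)
    intro α β M
    rw [hg, hH, hH, hcomm]
    simp only [hdiag, hrot, Pi.add_apply, Pi.smul_apply, smul_eq_mul,
      Matrix.cons_val_zero, Matrix.cons_val_one, Matrix.head_cons,
      Matrix.cons_val_two, Matrix.tail_cons]
    linear_combination (1 / 2 * n * ((M 0 * n⁻¹) ^ 2 + (M 1 * n⁻¹) ^ 2)
      - α 0 - β 1) * h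
  · -- (iii)
    intro α β M h1 h2
    rw [hg]
    simp only
    rw [hdot, hdot, hdot]
    simp only [dotProduct, Fin.sum_univ_three, Pi.add_apply, Pi.smul_apply,
      smul_eq_mul] at h1 h2 ⊢
    constructor
    · linear_combination (c ^ 2 - s ^ 2) * h1 + 4 * c * s * h2
    · linear_combination (-(c * s)) * h1 + (c ^ 2 - s ^ 2) * h2
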